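/- Let λ, τ be real numbers with 0 < τ < λ, k := τ/λ, θ⋆ := 2π − arcsin k, and h(θ) := λ cos θ − τ θ − (λ cos θ⋆ − τ θ⋆). Then h has exactly one zero θ̂ in the open interval (θ⋆ − 2π, θ⋆); moreover this zero satisfies θ⋆ − 2π < θ̂ < 3π − θ⋆. -/

import Mathlib

open Real Set

lemma aux_sin (c θ : ℝ) (hc1 : -(Real.pi/2) ≤ c) (hc2 : c ≤ Real.pi/2)
    (h1 : c < θ) (h2 : θ < Real.pi - c) : Real.sin c < Real.sin θ := by
  rcases le_or_gt θ (Real.pi/2) with hle | hlt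
  · exact Real.strictMonoOn_sin ⟨hc1, hc2⟩ ⟨le_trans hc1 h1.le, hle⟩ h1
  · rw [← Real.sin_pi_sub θ]
    exact Real.strictMonoOn_sin ⟨hc1, hc2⟩ ⟨by linarith, by linarith⟩ (by linarith)

/-- For `0 < τ < λ`, `k = τ/λ`, `θ⋆ = 2π − arcsin k`, and
`h θ = λ cos θ − τ θ − (λ cos θ⋆ − τ θ⋆)`, the function `h` has exactly one zero
`θ̂` in the open interval `(θ⋆ − 2π, θ⋆)`, and moreover `θ̂ < 3π − θ⋆`. -/
theorem stmt0 (lam tau k θs : ℝ) (htau : 0 < tau) (htl : tau < lam)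
    (hk : k = tau / lam) (hθs : θs = 2 * Real.pi - Real.arcsin k)
    (h : ℝ → ℝ)
    (hdef : ∀ θ, h θ = lam * Real.cos θ - tau * θ - (lam * Real.cos θs - tau * θs)) :
    ∃ θh : ℝ, θh ∈ Set.Ioo (θs - 2 * Real.pi) θs ∧ h θh = 0 ∧
      (∀ θ' ∈ Set.Ioo (θs - 2 * Real.pi) θs, h θ' = 0 → θ' = θh) ∧
      θh < 3 * Real.pi - θs := by
  have hlam : 0 < lam := htau.trans htl
  have hk0 : 0 < k := by rw [hk]; positivity
  have hk1 : k < 1 := by rw [hk]; exact (div_lt_one hlam).2 htl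
  have hlamk : lam * k = tau := by rw [hk]; field_simp [hlam.ne']
  set as := Real.arcsin k with has
  have has0 : 0 < as := Real.arcsin_pos.2 hk0
  have has2 : as < Real.pi / 2 := Real.arcsin_lt_pi_div_two.2 hk1
  have hsinas : Real.sin as = k := Real.sin_arcsin (by linarith) hk1.le
  have hpi : 0 < Real.pi := Real.pi_pos
  set a := θs - 2 * Real.pi with ha
  set t1 := Real.pi + as with ht1
  have haeq : a = -as := by rw [ha, hθs]; ring
  have ht1θs : t1 < θs := by rw [ht1, hθs]; linarith
  have hat1 : a < t1 := by rw [haeq, ht1]; linarith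
  have hfun : h = fun θ => lam * Real.cos θ - tau * θ - (lam * Real.cos θs - tau * θs) :=
    funext hdef
  have hcont : Continuous h := by rw [hfun]; continuity
  have hderiv : ∀ θ, HasDerivAt h (-(lam * Real.sin θ) - tau) θ := by
    intro θ
    rw [hfun]
    have := (((Real.hasDerivAt_cos θ).const_mul lam).sub
      ((hasDerivAt_id θ).const_mul tau)).sub_const (lam * Real.cos θs - tau * θs)
    simpa [mul_comm, mul_neg] using this
  -- sin x > -k on (a, t1)
  have hsin1 : ∀ x ∈ Set.Ioo a t1, -k < Real.sin x := by
    intro x hx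
    have h1 : -as < x := haeq ▸ hx.1
    have h2 : x < Real.pi + as := hx.2
    have := aux_sin (-as) x (by linarith) (by linarith) h1 (by linarith)
    rwa [Real.sin_neg, hsinas] at this
  -- sin x < -k on (t1, θs)
  have hsin2 : ∀ x ∈ Set.Ioo t1 θs, Real.sin x < -k := by
    intro x hx
    have h1 : as < x - Real.pi := by have := hx.1; rw [ht1] at this; linarith
    have h2 : x - Real.pi < Real.pi - as := by
      have := hx.2; rw [hθs] at this; linarith
    have := aux_sin as (x - Real.pi) (by linarith) has2.le h1 h2
    rw [hsinas] at this
    have hs : Real.sin (x - Real.pi) = -Real.sin x := by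
      rw [← neg_sub, Real.sin_neg, Real.sin_pi_sub]
    linarith [this, hs ▸ this]
  have hanti : StrictAntiOn h (Set.Icc a t1) := by
    apply strictAntiOn_of_deriv_neg (convex_Icc _ _) hcont.continuousOn
    intro x hx
    rw [interior_Icc] at hx
    rw [(hderiv x).deriv]
    have := hsin1 x hx
    nlinarith
  have hmono : StrictMonoOn h (Set.Icc t1 θs) := by
    apply strictMonoOn_of_deriv_pos (convex_Icc _ _) hcont.continuousOn
    intro x hx
    rw [interior_Icc] at hx
    rw [(hderiv x).deriv]
    have := hsin2 x hx
    nlinarith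
  have hθs0 : h θs = 0 := by rw [hdef]; ring
  have hha : h a = 2 * Real.pi * tau := by
    rw [hdef, ha, Real.cos_sub_two_pi]; ring
  have hht1 : h t1 < 0 := by
    have := hmono (Set.left_mem_Icc.2 ht1θs.le) (Set.right_mem_Icc.2 ht1θs.le) ht1θs
    rwa [hθs0] at this
  have hzero : (0:ℝ) ∈ Set.Ioo (h t1) (h a) := ⟨hht1, by rw [hha]; positivity⟩
  obtain ⟨θh, hθh, hθh0⟩ := intermediate_value_Ioo' hat1.le hcont.continuousOn hzero
  refine ⟨θh, ⟨hθh.1, hθh.2.trans ht1θs⟩, hθh0, ?_, ?_⟩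
  · intro θ' hθ' h0
    rcases lt_or_ge θ' t1 with hlt | hge
    · exact hanti.injOn ⟨hθ'.1.le, hlt.le⟩ ⟨hθh.1.le, hθh.2.le⟩ (h0.trans hθh0.symm)
    · exfalso
      have := hmono ⟨hge, hθ'.2.le⟩ (Set.right_mem_Icc.2 ht1θs.le) hθ'.2
      rw [hθs0, h0] at this
      exact lt_irrefl 0 this
  · have : t1 = 3 * Real.pi - θs := by rw [ht1, hθs]; ring
    linarith [hθh.2]
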